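/- Let H be a housing market over a finite agent set N with strict partial order preferences ≻_a for each agent a. Let X be an allocation (a permutation-like set of arcs assigning each agent exactly one house among its acceptable ones) in the strong core of H, and let S be a peak set of X, i.e., an absorbing strongly connected component of the digraph whose arcs (a,b) satisfy b ⪰_a X(a). Then for every s ∈ S, the arc (s, X(s)) is undominated (no agent b with b ≻_s X(s) is acceptable to s), and X(s) ∈ S; moreover, every arc (a,b) of the underlying graph with a ∈ S and b ∉ S is dominated by the arc (a, X(a)), i.e., X(a) ≻_a b. -/

import Mathlib

/-- A housing market: each agent `a` has a strict partial order `pref a`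
(`pref a b c` means agent `a` strictly prefers house `b` to house `c`). -/
structure Market (N : Type) where
  pref : N → N → N → Prop
  irrefl : ∀ a b, ¬ pref a b b
  asymm : ∀ a b c, pref a b c → ¬ pref a c b
  trans : ∀ a b c d, pref a b c → pref a c d → pref a b d

namespace Market

variable {N : Type}

/-- `b` is acceptable to `a`: `b ⪰_a a`, i.e. not `a ≻_a b`. -/
def acceptable (H : Market N) (a b : N) : Prop := ¬ H.pref a a b

/-- Arcs of the underlying digraph `D^H`. -/
def E (H : Market N) : Set (N × N) := {e | H.acceptable e.1 e.2}

/-- Undominated arcs of `D^H`. -/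
def undominated (H : Market N) : Set (N × N) :=
  {e | e ∈ H.E ∧ ∀ b', H.acceptable e.1 b' → ¬ H.pref e.1 b' e.2}

/-- A full allocation, given as a function assigning each agent its house. -/
def IsAllocation (H : Market N) (X : N → N) : Prop :=
  Function.Bijective X ∧ ∀ a, H.acceptable a (X a)

/-- A cycle of length `k ≥ 1` with all arcs in the arc set `A`. -/
def IsCycleIn (A : Set (N × N)) (k : ℕ) (c : ZMod k → N) : Prop :=
  0 < k ∧ Function.Injective c ∧ ∀ i, (c i, c (i + 1)) ∈ A

/-- `E_{[⪰X]}`: arcs `(a,b)` with `b ⪰_a X(a)`. -/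
def weakImprove (H : Market N) (X : N → N) : Set (N × N) :=
  {e | e ∈ H.E ∧ ¬ H.pref e.1 (X e.1) e.2}

/-- `E_{[≻X]}`: arcs `(a,b)` with `b ≻_a X(a)`. -/
def strictImprove (H : Market N) (X : N → N) : Set (N × N) :=
  {e | e ∈ H.E ∧ H.pref e.1 e.2 (X e.1)}

/-- A (weakly) blocking cycle for `X`. -/
def Blocks (H : Market N) (X : N → N) (k : ℕ) (c : ZMod k → N) : Prop :=
  IsCycleIn H.E k c ∧
  (∀ i, ¬ H.pref (c i) (X (c i)) (c (i + 1))) ∧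
  (∃ i, H.pref (c i) (c (i + 1)) (X (c i)))

/-- The strong core: allocations admitting no blocking cycle. -/
def InStrongCore (H : Market N) (X : N → N) : Prop :=
  H.IsAllocation X ∧ ¬ ∃ k c, H.Blocks X k c

/-- A strictly blocking cycle for `X`. -/
def StrictBlocks (H : Market N) (X : N → N) (k : ℕ) (c : ZMod k → N) : Prop :=
  IsCycleIn H.E k c ∧ ∀ i, H.pref (c i) (c (i + 1)) (X (c i))

/-- The core: allocations admitting no strictly blocking cycle. -/
def InCore (H : Market N) (X : N → N) : Prop :=
  H.IsAllocation X ∧ ¬ ∃ k c, H.StrictBlocks X k c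

/-- An allocation of the submarket `H|_S`, given as a set of arcs among agents of `S`. -/
def IsAllocationOn (H : Market N) (S : Set N) (X : Set (N × N)) : Prop :=
  X ⊆ H.E ∧ (∀ e ∈ X, e.1 ∈ S ∧ e.2 ∈ S) ∧
  (∀ a ∈ S, ∃! b, (a, b) ∈ X) ∧ (∀ b ∈ S, ∃! a, (a, b) ∈ X)

/-- A blocking cycle for the arc set `X` within the submarket `H|_S`. -/
def BlocksOn (H : Market N) (S : Set N) (X : Set (N × N)) (k : ℕ) (c : ZMod k → N) : Prop :=
  IsCycleIn H.E k c ∧ (∀ i, c i ∈ S) ∧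
  (∀ i b, (c i, b) ∈ X → ¬ H.pref (c i) b (c (i + 1))) ∧
  (∃ i b, (c i, b) ∈ X ∧ H.pref (c i) (c (i + 1)) b)

/-- Membership in the strong core of the submarket `H|_S`. -/
def InStrongCoreOn (H : Market N) (S : Set N) (X : Set (N × N)) : Prop :=
  H.IsAllocationOn S X ∧ ¬ ∃ k c, H.BlocksOn S X k c

end Market

/-- The arcs of the allocation `X` whose tails lie in `S`. -/
def graphRestrict {N : Type} (X : N → N) (S : Set N) : Set (N × N) :=
  {e | e.1 ∈ S ∧ e.2 = X e.1}

/-- Reachability in the digraph given by arc set `A`. -/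
def reach {N : Type} (A : Set (N × N)) : N → N → Prop :=
  Relation.ReflTransGen (fun u v => (u, v) ∈ A)

/-- A strongly connected component of the digraph given by arc set `A`. -/
def IsSCC {N : Type} (A : Set (N × N)) (S : Set N) : Prop :=
  S.Nonempty ∧ (∀ u ∈ S, ∀ v ∈ S, reach A u v) ∧
  (∀ u ∈ S, ∀ v, reach A u v → reach A v u → v ∈ S)

/-- An absorbing set: a strongly connected component not left by any arc. -/
def IsAbsorbing {N : Type} (A : Set (N × N)) (S : Set N) : Prop :=
  IsSCC A S ∧ ∀ e ∈ A, e.1 ∈ S → e.2 ∈ S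


private lemma exists_nodup_chain {N : Type} [DecidableEq N] {r : N → N → Prop} {u v : N}
    (h : Relation.ReflTransGen r u v) :
    ∃ (l : List N) (hn : l ≠ []),
      l.Chain' r ∧ l.head hn = u ∧ l.getLast hn = v ∧ l.Nodup := by
  induction h with
  | refl => exact ⟨[u], by simp, List.isChain_singleton _, by simp, by simp, by simp⟩
  | @tail w c hab hbc ih =>
    obtain ⟨l, hn, hch, hhd, hlast, hnd⟩ := ih
    by_cases hv : c ∈ l
    · have hi : l.idxOf c < l.length := List.idxOf_lt_length_iff.mpr hv
      refine ⟨l.take (l.idxOf c + 1), ?_, ?_, ?_, ?_, ?_⟩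
      · simp [List.take_eq_nil_iff, hn]
      · exact hch.prefix (List.take_prefix _ _)
      · rw [List.head_eq_getElem, List.getElem_take, ← List.head_eq_getElem hn, hhd]
      · have hlen : (l.take (l.idxOf c + 1)).length = l.idxOf c + 1 := by
          simp [List.length_take]; omega
        rw [List.getLast_eq_getElem, List.getElem_take]
        simp only [hlen]
        simpa using List.getElem_idxOf hi
      · exact List.Nodup.sublist (List.take_sublist _ _) hnd
    · refine ⟨l ++ [c], by simp, ?_, ?_, ?_, ?_⟩
      · refine hch.append (by simp) ?_
        intro x hx y hy
        rw [List.getLast?_eq_getLast hn, hlast] at hx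
        simp at hx hy; subst hx; subst hy; exact hbc
      · rw [List.head_append]; simp [hn, hhd]
      · rw [List.getLast_append]; simp
      · simp [List.nodup_append, hnd, hv]; rintro a ha rfl; exact hv ha

private lemma cycle_of_list {N : Type} {r : N → N → Prop} {L : List N}
    (hnd : L.Nodup) (hch : L.Chain' r) (hk : 2 ≤ L.length) (hne : L ≠ [])
    (hwrap : r (L.getLast hne) (L.head hne)) :
    ∃ (k : ℕ) (c : ZMod k → N), 0 < k ∧ Function.Injective c ∧
      (∀ i, r (c i) (c (i + 1))) ∧
      c 0 = L.head hne ∧ c 1 = L[1]'(by omega) := by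
  have hk0 : 0 < L.length := by omega
  haveI : NeZero L.length := ⟨by omega⟩
  haveI : Fact (1 < L.length) := ⟨by omega⟩
  refine ⟨L.length, fun i => L[i.val]'(ZMod.val_lt i), hk0, ?_, ?_, ?_, ?_⟩
  · intro i j hij
    apply ZMod.val_injective
    have := List.nodup_iff_injective_get.mp hnd
      (a₁ := ⟨i.val, ZMod.val_lt i⟩) (a₂ := ⟨j.val, ZMod.val_lt j⟩) (by simpa using hij)
    exact congrArg Fin.val this
  · intro i
    have hval : (i + 1).val = (i.val + 1) % L.length := by
      rw [ZMod.val_add, ZMod.val_one]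
    by_cases hlt : i.val + 1 < L.length
    · have : (i + 1).val = i.val + 1 := by rw [hval, Nat.mod_eq_of_lt hlt]
      simp only [this]
      have := List.isChain_iff_getElem.mp hch i.val (by omega)
      simpa using this
    · have hi : i.val = L.length - 1 := by have := ZMod.val_lt i; omega
      have : (i + 1).val = 0 := by
        rw [hval, hi, Nat.sub_add_cancel hk0, Nat.mod_self]
      simp only [this, hi]
      rw [List.getLast_eq_getElem, List.head_eq_getElem] at hwrap
      exact hwrap
  · simp [ZMod.val_zero, List.head_eq_getElem]
  · simp [ZMod.val_one]


theorem stmt1 {N : Type} [Fintype N] (H : Market N) (X : N → N)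
    (hX : H.InStrongCore X) (S : Set N)
    (hS : IsAbsorbing (H.weakImprove X) S) :
    (∀ s ∈ S, (s, X s) ∈ H.undominated ∧ X s ∈ S) ∧
    (∀ a ∈ S, ∀ b, b ∉ S → (a, b) ∈ H.E → H.pref a (X a) b) := by
  obtain ⟨hAlloc, hNoBlock⟩ := hX
  obtain ⟨hSCC, hAbs⟩ := hS
  have key : ∀ s ∈ S, ∀ b, H.acceptable s b → ¬ H.pref s b (X s) := by
    intro s hs b hacc hpref
    letI := Classical.decEq N
    have hsb : (s, b) ∈ H.weakImprove X := ⟨hacc, H.asymm _ _ _ hpref⟩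
    have hbS : b ∈ S := hAbs (s, b) hsb hs
    have hne : s ≠ b := by
      rintro rfl
      exact hAlloc.2 s hpref
    have hreach : Relation.ReflTransGen (fun u v => (u, v) ∈ H.weakImprove X) b s :=
      hSCC.2.1 b hbS s hs
    obtain ⟨P, hPn, hPch, hPhd, hPlast, hPnd⟩ := exists_nodup_chain hreach
    have hP2 : 2 ≤ P.length := by
      rcases P with _ | ⟨x, _ | ⟨y, t⟩⟩
      · simp at hPn
      · simp at hPhd hPlast
        exact absurd (hPlast.symm.trans hPhd) hne
      · simp
    have hdne : P.dropLast ≠ [] := by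
      have hlen : P.dropLast.length = P.length - 1 := List.length_dropLast
      intro h; rw [h] at hlen; simp at hlen; omega
    have hdlen : P.dropLast.length = P.length - 1 := List.length_dropLast
    set L := s :: P.dropLast with hLdef
    have hLne : L ≠ [] := by simp [hLdef]
    have hsnot : s ∉ P.dropLast := by
      have hnd2 : (P.dropLast ++ [P.getLast hPn]).Nodup := by
        rw [List.dropLast_append_getLast]; exact hPnd
      rw [List.nodup_append] at hnd2
      intro hmem
      exact hnd2.2.2 s hmem s (by simp [hPlast]) rfl
    have hLnd : L.Nodup := by
      simp only [hLdef, List.nodup_cons]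
      exact ⟨hsnot, List.Nodup.sublist (List.dropLast_sublist P) hPnd⟩
    have hdhead : P.dropLast.head hdne = b := by
      rw [List.head_eq_getElem, List.getElem_dropLast, ← List.head_eq_getElem hPn, hPhd]
    have hLch : L.Chain' (fun u v => (u, v) ∈ H.weakImprove X) := by
      rw [hLdef]; show List.IsChain _ _; rw [List.isChain_cons]
      refine ⟨?_, hPch.prefix (List.dropLast_prefix P)⟩
      intro y hy
      rw [List.head?_eq_head hdne, hdhead] at hy
      simp at hy; subst hy; exact hsb
    have hLk : 2 ≤ L.length := by simp [hLdef]; omega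
    have hwrap : (L.getLast hLne, L.head hLne) ∈ H.weakImprove X := by
      have h1 : L.head hLne = s := rfl
      have h2 : L.getLast hLne = P.dropLast.getLast hdne := List.getLast_cons hdne
      have h3 : P.dropLast.getLast hdne = P[P.length - 2]'(by omega) := by
        rw [List.getLast_eq_getElem, List.getElem_dropLast]
        congr 1
        omega
      have h4 := List.isChain_iff_getElem.mp hPch (P.length - 2) (by omega)
      have h5 : P[P.length - 1]'(by omega) = s := by
        rw [← List.getLast_eq_getElem hPn, hPlast]
      rw [h1, h2, h3]
      have h6 : P.length - 2 + 1 = P.length - 1 := by omega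
      simp only [List.get_eq_getElem, h6, h5] at h4
      exact h4
    obtain ⟨k, c, hk0, hcinj, harc, hc0, hc1⟩ := cycle_of_list hLnd hLch hLk hLne hwrap
    have hc0' : c 0 = s := hc0
    have hc1' : c 1 = b := by
      rw [hc1]
      show P.dropLast[0]'_ = b
      rw [← hdhead, List.head_eq_getElem]
    apply hNoBlock
    refine ⟨k, c, ⟨hk0, hcinj, fun i => (harc i).1⟩, fun i => (harc i).2, 0, ?_⟩
    have : (0 : ZMod k) + 1 = 1 := by ring
    rw [this, hc0', hc1']
    exact hpref
  refine ⟨fun s hs => ⟨⟨hAlloc.2 s, fun b hb => key s hs b hb⟩,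
      hAbs (s, X s) ⟨hAlloc.2 s, H.irrefl s (X s)⟩ hs⟩, fun a ha b hbS hbE => ?_⟩
  by_contra hnp
  exact hbS (hAbs (a, b) ⟨hbE, hnp⟩ ha)
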